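/- Let V be a finite-dimensional ℂ-vector space with a diagonalizable endomorphism t with eigenspace decomposition V = ⊕ V_a, and let D act as a scalar d_a on each V_a. Suppose for each eigenvalue a the polynomial x·(x² − a·x + d_a) has three distinct roots (in particular d_a ≠ 0 and x² − a x + d_a has distinct nonzero roots). Then the endomorphism of V ⊕ V ⊕ V given in block form by ((t,1,0),(−D,0,1),(0,0,0)) is diagonalizable. -/

import Mathlib

open Module

/-- If `t` is diagonalizable, `D` acts as a scalar `d_a` on each eigenspace `V_a` of `t`,
and each polynomial `x (x² - a x + d_a)` has three distinct roots, then the block operator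
`(f, g, h) ↦ (t f + g, -D f + h, 0)` on `V ⊕ V ⊕ V` is diagonalizable. -/
theorem block_operator_diagonalizable_three
    (V : Type*) [AddCommGroup V] [Module ℂ V] [FiniteDimensional ℂ V]
    (t D : V →ₗ[ℂ] V) (n : ℕ) (b : Basis (Fin n) ℂ V)
    (h : ∀ i, ∃ a d : ℂ, t (b i) = a • b i ∧ D (b i) = d • b i ∧
      ∃ α β : ℂ, α ≠ β ∧ α ≠ 0 ∧ β ≠ 0 ∧
        ∀ x : ℂ, x ^ 2 - a * x + d = (x - α) * (x - β)) :
    ∃ (m : ℕ) (c : Basis (Fin m) ℂ (V × V × V)), ∀ i, ∃ μ : ℂ,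
      (LinearMap.prod
        (t ∘ₗ LinearMap.fst ℂ V (V × V) + LinearMap.fst ℂ V V ∘ₗ LinearMap.snd ℂ V (V × V))
        (LinearMap.prod
          (-(D ∘ₗ LinearMap.fst ℂ V (V × V)) + LinearMap.snd ℂ V V ∘ₗ LinearMap.snd ℂ V (V × V))
          0)) (c i) = μ • c i := by
  choose a d ht hD α β hαβ hα0 hβ0 hpoly using h
  have hd : ∀ i, d i = α i * β i := by
    intro i
    have h0 := hpoly i 0
    linear_combination h0
  have ha : ∀ i, a i = α i + β i := by
    intro i
    have h1 := hpoly i (α i)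
    have h3 : α i * (a i - α i - β i) = 0 := by
      linear_combination (-1 : ℂ) * h1 + hd i
    rcases mul_eq_zero.mp h3 with h4 | h4
    · exact absurd h4 (hα0 i)
    · linear_combination h4
  have hdne : ∀ i, d i ≠ 0 := by
    intro i
    rw [hd i]
    exact mul_ne_zero (hα0 i) (hβ0 i)
  -- eigenvector family
  set w : Fin n × Fin 3 → V × V × V := fun p =>
    ![(b p.1, (-(β p.1)) • b p.1, (0 : V)),
      (b p.1, (-(α p.1)) • b p.1, (0 : V)),
      (b p.1, (-(a p.1)) • b p.1, d p.1 • b p.1)] p.2 with hw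
  set S : Submodule ℂ (V × V × V) := Submodule.span ℂ (Set.range w) with hS
  have hmem : ∀ p, w p ∈ S := fun p => Submodule.subset_span ⟨p, rfl⟩
  have hw0 : ∀ i, w (i, 0) = (b i, (-(β i)) • b i, (0 : V)) := fun i => rfl
  have hw1 : ∀ i, w (i, 1) = (b i, (-(α i)) • b i, (0 : V)) := fun i => rfl
  have hw2 : ∀ i, w (i, 2) = (b i, (-(a i)) • b i, d i • b i) := fun i => rfl
  have key2 : ∀ i, ((0 : V), b i, (0 : V)) ∈ S := by
    intro i
    have hne : α i - β i ≠ 0 := sub_ne_zero.mpr (hαβ i)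
    have heq : ((0 : V), b i, (0 : V)) = (α i - β i)⁻¹ • (w (i, 0) - w (i, 1)) := by
      rw [hw0, hw1]
      refine Prod.ext ?_ (Prod.ext ?_ ?_) <;> simp <;>
        match_scalars <;> field_simp <;> ring
    rw [heq]
    exact S.smul_mem _ (S.sub_mem (hmem (i, 0)) (hmem (i, 1)))
  have key1 : ∀ i, (b i, (0 : V), (0 : V)) ∈ S := by
    intro i
    have heq : (b i, (0 : V), (0 : V)) = w (i, 0) + β i • ((0 : V), b i, (0 : V)) := by
      rw [hw0]
      refine Prod.ext ?_ (Prod.ext ?_ ?_) <;> simp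
    rw [heq]
    exact S.add_mem (hmem (i, 0)) (S.smul_mem _ (key2 i))
  have key3 : ∀ i, ((0 : V), (0 : V), b i) ∈ S := by
    intro i
    have heq : ((0 : V), (0 : V), b i) =
        (d i)⁻¹ • (w (i, 2) - (b i, (0 : V), (0 : V)) + a i • ((0 : V), b i, (0 : V))) := by
      rw [hw2]
      refine Prod.ext ?_ (Prod.ext ?_ ?_) <;> simp
      rw [smul_smul, inv_mul_cancel₀ (hdne i), one_smul]
    rw [heq]
    exact S.smul_mem _ (S.add_mem (S.sub_mem (hmem (i, 2)) (key1 i)) (S.smul_mem _ (key2 i)))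
  -- spanning
  have hall1 : ∀ v : V, (v, (0 : V), (0 : V)) ∈ S := by
    intro v
    have hle : ⊤ ≤ S.comap (LinearMap.inl ℂ V (V × V)) := by
      rw [← b.span_eq]
      exact Submodule.span_le.mpr (by rintro _ ⟨i, rfl⟩; exact key1 i)
    exact hle trivial
  have hall2 : ∀ v : V, ((0 : V), v, (0 : V)) ∈ S := by
    intro v
    have hle : ⊤ ≤ S.comap ((LinearMap.inr ℂ V (V × V)) ∘ₗ (LinearMap.inl ℂ V V)) := by
      rw [← b.span_eq]
      exact Submodule.span_le.mpr (by rintro _ ⟨i, rfl⟩; exact key2 i)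
    exact hle trivial
  have hall3 : ∀ v : V, ((0 : V), (0 : V), v) ∈ S := by
    intro v
    have hle : ⊤ ≤ S.comap ((LinearMap.inr ℂ V (V × V)) ∘ₗ (LinearMap.inr ℂ V V)) := by
      rw [← b.span_eq]
      exact Submodule.span_le.mpr (by rintro _ ⟨i, rfl⟩; exact key3 i)
    exact hle trivial
  have hspan : ⊤ ≤ S := by
    rintro ⟨x, y, z⟩ -
    have : (x, y, z) = (x, (0:V), (0:V)) + ((0:V), y, (0:V)) + ((0:V), (0:V), z) := by
      simp
    rw [this]
    exact S.add_mem (S.add_mem (hall1 x) (hall2 y)) (hall3 z)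
  have hcard : Fintype.card (Fin n × Fin 3) = finrank ℂ (V × V × V) := by
    have hV : finrank ℂ V = n := by
      rw [finrank_eq_card_basis b, Fintype.card_fin]
    simp [Module.finrank_prod, hV, Fintype.card_prod]
    ring
  let c0 : Basis (Fin n × Fin 3) ℂ (V × V × V) :=
    basisOfTopLeSpanOfCardEqFinrank w hspan hcard
  have hc0 : ∀ p, c0 p = w p := fun p => by
    simp [c0, coe_basisOfTopLeSpanOfCardEqFinrank]
  let e := Fintype.equivFin (Fin n × Fin 3)
  refine ⟨Fintype.card (Fin n × Fin 3), c0.reindex e, fun j => ?_⟩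
  rw [Basis.reindex_apply, hc0]
  obtain ⟨i, k⟩ := e.symm j
  have hk : k = 0 ∨ k = 1 ∨ k = 2 := by omega
  rcases hk with rfl | rfl | rfl
  · refine ⟨α i, ?_⟩
    rw [hw0]
    simp only [LinearMap.prod_apply, Pi.prod, LinearMap.add_apply, LinearMap.coe_comp,
      Function.comp_apply, LinearMap.fst_apply, LinearMap.snd_apply, LinearMap.neg_apply,
      LinearMap.zero_apply]
    refine Prod.ext ?_ (Prod.ext ?_ ?_) <;> simp [ht, hD, ha, hd] <;> module
  · refine ⟨β i, ?_⟩
    rw [hw1]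
    simp only [LinearMap.prod_apply, Pi.prod, LinearMap.add_apply, LinearMap.coe_comp,
      Function.comp_apply, LinearMap.fst_apply, LinearMap.snd_apply, LinearMap.neg_apply,
      LinearMap.zero_apply]
    refine Prod.ext ?_ (Prod.ext ?_ ?_) <;> simp [ht, hD, ha, hd] <;> module
  · refine ⟨0, ?_⟩
    rw [hw2]
    simp only [LinearMap.prod_apply, Pi.prod, LinearMap.add_apply, LinearMap.coe_comp,
      Function.comp_apply, LinearMap.fst_apply, LinearMap.snd_apply, LinearMap.neg_apply,
      LinearMap.zero_apply]
    refine Prod.ext ?_ (Prod.ext ?_ ?_) <;> simp [ht, hD, ha, hd] <;> module
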